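/- The function τ ↦ τ · cot τ is decreasing and concave on (0, π/2). -/

import Mathlib

open Real Set

private noncomputable def g1 (x : ℝ) : ℝ := (Real.sin x * Real.cos x - x) / Real.sin x ^ 2

private lemma hasDerivAt_f {x : ℝ} (hx : Real.sin x ≠ 0) :
    HasDerivAt (fun τ : ℝ => τ * Real.cos τ / Real.sin τ) (g1 x) x := by
  have h1 : HasDerivAt (fun τ : ℝ => τ * Real.cos τ)
      (1 * Real.cos x + x * (-Real.sin x)) x :=
    (hasDerivAt_id x).mul (Real.hasDerivAt_cos x)
  have h := h1.div (Real.hasDerivAt_sin x) hx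
  refine h.congr_deriv ?_
  unfold g1
  field_simp
  linear_combination (-x) * Real.sin_sq_add_cos_sq x

private lemma hasDerivAt_g1 {x : ℝ} (hx : Real.sin x ≠ 0) :
    HasDerivAt g1 (2 * (x * Real.cos x - Real.sin x) / Real.sin x ^ 3) x := by
  have hnum : HasDerivAt (fun τ : ℝ => Real.sin τ * Real.cos τ - τ)
      (Real.cos x * Real.cos x + Real.sin x * (-Real.sin x) - 1) x :=
    ((Real.hasDerivAt_sin x).mul (Real.hasDerivAt_cos x)).sub (hasDerivAt_id x)
  have hden : HasDerivAt (fun τ : ℝ => Real.sin τ ^ 2)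
      (2 * Real.sin x ^ 1 * Real.cos x) x := (Real.hasDerivAt_sin x).pow 2
  have hx2 : Real.sin x ^ 2 ≠ 0 := pow_ne_zero 2 hx
  have h := hnum.div hden hx2
  refine h.congr_deriv ?_
  have hs : Real.sin x ^ 2 = 1 - Real.cos x ^ 2 := by
    have := Real.sin_sq_add_cos_sq x; nlinarith
  field_simp
  linear_combination (-Real.sin x) * Real.sin_sq_add_cos_sq x

theorem tau_cot_anti_concave :
    AntitoneOn (fun τ : ℝ => τ * Real.cos τ / Real.sin τ) (Set.Ioo 0 (π / 2)) ∧
    ConcaveOn ℝ (Set.Ioo 0 (π / 2)) (fun τ : ℝ => τ * Real.cos τ / Real.sin τ) := by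
  set f : ℝ → ℝ := fun τ => τ * Real.cos τ / Real.sin τ with hf
  have hconv : Convex ℝ (Set.Ioo (0:ℝ) (π/2)) := convex_Ioo _ _
  have hsin : ∀ x ∈ Set.Ioo (0:ℝ) (π/2), 0 < Real.sin x := fun x hx =>
    Real.sin_pos_of_pos_of_lt_pi hx.1 (lt_trans hx.2 (by linarith [Real.pi_pos]))
  have hcont : ContinuousOn f (Set.Ioo 0 (π/2)) := by
    apply ContinuousOn.div
    · exact (continuousOn_id.mul (Real.continuous_cos.continuousOn))
    · exact Real.continuous_sin.continuousOn
    · exact fun x hx => ne_of_gt (hsin x hx)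
  have hderiv : ∀ x ∈ Set.Ioo (0:ℝ) (π/2), deriv f x = g1 x := fun x hx =>
    (hasDerivAt_f (ne_of_gt (hsin x hx))).deriv
  have hint : interior (Set.Ioo (0:ℝ) (π/2)) = Set.Ioo 0 (π/2) := interior_Ioo
  constructor
  · apply StrictAntiOn.antitoneOn
    apply strictAntiOn_of_deriv_neg hconv hcont
    intro x hx
    rw [hint] at hx
    rw [hderiv x hx]
    have hs := hsin x hx
    have hlt : Real.sin x * Real.cos x < x := by
      have h1 : Real.sin x < x := Real.sin_lt hx.1
      have h2 : Real.cos x ≤ 1 := Real.cos_le_one x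
      nlinarith
    unfold g1
    apply div_neg_of_neg_of_pos (by linarith) (by positivity)
  · apply StrictConcaveOn.concaveOn
    apply strictConcaveOn_of_deriv2_neg hconv hcont
    intro x hx
    rw [hint] at hx
    have heq : deriv f =ᶠ[nhds x] g1 := by
      filter_upwards [isOpen_Ioo.mem_nhds hx] with y hy
      exact hderiv y hy
    rw [show deriv^[2] f x = deriv (deriv f) x from rfl, heq.deriv_eq,
      (hasDerivAt_g1 (ne_of_gt (hsin x hx))).deriv]
    have hs := hsin x hx
    have hc : 0 < Real.cos x := Real.cos_pos_of_mem_Ioo ⟨by linarith [hx.1, Real.pi_pos], hx.2⟩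
    have htan : x < Real.tan x := Real.lt_tan hx.1 hx.2
    rw [Real.tan_eq_sin_div_cos] at htan
    have hlt : x * Real.cos x < Real.sin x := by
      rw [lt_div_iff₀ hc] at htan; linarith
    apply div_neg_of_neg_of_pos (by linarith) (by positivity)
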